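/- Every nontrivial finite-dimensional Archimedean partially ordered vector space has net catching elements. -/

import Mathlib

/-- A net decreases to `x`: antitone with infimum `x`. -/
def DecrTo {ι X : Type*} [Preorder ι] [Preorder X] (f : ι → X) (x : X) : Prop :=
  Antitone f ∧ IsGLB (Set.range f) x

/-- `y` is a net catching element. -/
def NetCatchingElem {X : Type*} [Preorder X] [Zero X] (y : X) : Prop :=
  ∀ (ι : Type) [Preorder ι], Nonempty ι → Directed (· ≤ ·) (id : ι → ι) →
    ∀ f : ι → X, DecrTo f (0 : X) → ∃ α : ι, f α ≤ y

theorem stmt10 {X : Type*} [AddCommGroup X] [PartialOrder X] [IsOrderedAddMonoid X] [Module ℝ X] [PosSMulStrictMono ℝ X] [PosSMulReflectLT ℝ X]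
    [FiniteDimensional ℝ X]
    (harch : ∀ x y : X, (∀ n : ℕ, n • x ≤ y) → x ≤ 0)
    (hnontriv : ∃ x : X, 0 < x) :
    ∃ y : X, NetCatchingElem y := by
  classical
  obtain ⟨x0, hx0⟩ := hnontriv
  let e := (Module.finBasis ℝ X).equivFun
  letI : NormedAddCommGroup X :=
    NormedAddCommGroup.induced X (Fin (Module.finrank ℝ X) → ℝ) e.toLinearMap e.injective
  letI : NormedSpace ℝ X :=
    NormedSpace.induced ℝ X (Fin (Module.finrank ℝ X) → ℝ) e.toLinearMap
  set V : Submodule ℝ X := Submodule.span ℝ {x : X | 0 ≤ x} with hV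
  set C : Set V := {v : V | (0 : X) ≤ (v : X)} with hC
  -- the cone C is convex
  have hCconv : Convex ℝ C := by
    intro a ha b hb s t hs ht hst
    show (0 : X) ≤ ((s • a + t • b : V) : X)
    push_cast
    exact add_nonneg (smul_nonneg hs ha) (smul_nonneg ht hb)
  have h0C : (0 : V) ∈ C := le_refl _
  -- C spans V
  have hCspan : Submodule.span ℝ C = (⊤ : Submodule ℝ V) := by
    apply Submodule.map_injective_of_injective V.injective_subtype
    rw [Submodule.map_span, Submodule.map_top, Submodule.range_subtype]
    have himg : V.subtype '' C = {x : X | 0 ≤ x} := by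
      ext x
      constructor
      · rintro ⟨v, hv, rfl⟩; exact hv
      · intro hx; exact ⟨⟨x, Submodule.subset_span hx⟩, hx, rfl⟩
    rw [himg, hV]
  have haff : affineSpan ℝ C = ⊤ := by
    have hins : insert (0 : V) C = C := Set.insert_eq_self.mpr h0C
    have h1 : (affineSpan ℝ (insert (0:V) C) : Set V) = (Submodule.span ℝ C : Set V) :=
      affineSpan_insert_zero (k := ℝ) C
    rw [hins, hCspan] at h1
    apply SetLike.coe_injective
    rw [h1]; simp
  -- interior point of C
  obtain ⟨u, hu⟩ : (interior C).Nonempty :=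
    (hCconv.interior_nonempty_iff_affineSpan_eq_top).mpr haff
  have huC : u ∈ C := interior_subset hu
  -- C is closed (uses the Archimedean property)
  have hCclosed : IsClosed C := by
    rw [← closure_subset_iff_isClosed]
    intro y hy
    have key : ∀ n : ℕ, n • (-(y : X)) ≤ (u : X) := by
      intro n
      have hn1 : (0:ℝ) < (n : ℝ) + 1 := by positivity
      have hmem : ((n:ℝ)+1)⁻¹ • u + ((n:ℝ)/((n:ℝ)+1)) • y ∈ C :=
        interior_subset <| hCconv.combo_interior_closure_mem_interior hu hy
          (by positivity) (by positivity)
          (by rw [inv_eq_one_div, ← add_div, add_comm]; exact div_self hn1.ne')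
      have h1 : (0 : X) ≤ ((((n:ℝ)+1)⁻¹ • u + ((n:ℝ)/((n:ℝ)+1)) • y : V) : X) := hmem
      have h2 : (0 : X) ≤ ((n:ℝ)+1) • ((((n:ℝ)+1)⁻¹ • u + ((n:ℝ)/((n:ℝ)+1)) • y : V) : X) :=
        smul_nonneg hn1.le h1
      have h3 : ((n:ℝ)+1) • ((((n:ℝ)+1)⁻¹ • u + ((n:ℝ)/((n:ℝ)+1)) • y : V) : X)
          = (u : X) + (n : ℝ) • (y : X) := by
        push_cast
        rw [smul_add, smul_smul, smul_smul]
        congr 2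
        · rw [mul_inv_cancel₀ hn1.ne', one_smul]
        · field_simp
      rw [h3] at h2
      have h4 : (n : ℝ) • (-(y : X)) ≤ (u : X) := by
        rw [smul_neg, neg_le_iff_add_nonneg]
        exact h2
      rwa [← Nat.cast_smul_eq_nsmul ℝ]
    have := harch (-(y : X)) (u : X) key
    exact neg_nonpos.mp this
  -- order intervals are bounded
  have hbdd : ∀ b : V, Bornology.IsBounded {v : V | v ∈ C ∧ b - v ∈ C} := by
    intro b
    by_contra hnb
    rw [isBounded_iff_forall_norm_le] at hnb
    push_neg at hnb
    choose d hd hdn using fun k : ℕ => hnb k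
    have hdkpos : ∀ k : ℕ, (0:ℝ) < ‖d k‖ := fun k =>
      lt_of_le_of_lt (Nat.cast_nonneg k) (hdn k)
    set s : ℕ → V := fun k => ‖d k‖⁻¹ • d k with hs
    have hsS : ∀ k, s k ∈ Metric.sphere (0:V) 1 := by
      intro k
      rw [mem_sphere_zero_iff_norm]
      simp only [hs]
      rw [norm_smul, norm_inv, norm_norm]
      exact inv_mul_cancel₀ (hdkpos k).ne'
    obtain ⟨w, hwS, ψ, hψ, htend⟩ := (isCompact_sphere (0:V) 1).tendsto_subseq hsS
    have hsC : ∀ k, s k ∈ C := by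
      intro k
      show (0:X) ≤ ((‖d k‖⁻¹ • d k : V) : X)
      push_cast
      exact smul_nonneg (by positivity) (hd k).1
    have hwC : w ∈ C :=
      hCclosed.mem_of_tendsto htend (Filter.Eventually.of_forall fun j => hsC (ψ j))
    -- the other limit
    have hnormtend : Filter.Tendsto (fun j => ‖d (ψ j)‖) Filter.atTop Filter.atTop := by
      apply Filter.tendsto_atTop_mono (fun j => ?_) tendsto_natCast_atTop_atTop
      calc ((j:ℕ):ℝ) ≤ (ψ j : ℝ) := by exact_mod_cast hψ.le_apply
      _ ≤ ‖d (ψ j)‖ := (hdn (ψ j)).le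
    have hinvtend : Filter.Tendsto (fun j => ‖d (ψ j)‖⁻¹) Filter.atTop (nhds 0) :=
      hnormtend.inv_tendsto_atTop
    have htend2 : Filter.Tendsto (fun j => ‖d (ψ j)‖⁻¹ • b - s (ψ j)) Filter.atTop
        (nhds (-w)) := by
      have h5 : Filter.Tendsto (fun j => ‖d (ψ j)‖⁻¹ • b) Filter.atTop (nhds ((0:ℝ) • b)) :=
        hinvtend.smul_const b
      rw [zero_smul] at h5
      simpa using h5.sub htend
    have hmem2 : ∀ j, ‖d (ψ j)‖⁻¹ • b - s (ψ j) ∈ C := by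
      intro j
      have : ‖d (ψ j)‖⁻¹ • b - s (ψ j) = ‖d (ψ j)‖⁻¹ • (b - d (ψ j)) := by
        rw [hs, smul_sub]
      rw [this]
      show (0:X) ≤ ((‖d (ψ j)‖⁻¹ • (b - d (ψ j)) : V) : X)
      push_cast
      exact smul_nonneg (by positivity) (hd (ψ j)).2
    have hnwC : -w ∈ C :=
      hCclosed.mem_of_tendsto htend2 (Filter.Eventually.of_forall hmem2)
    have hw0 : (w : X) = 0 := by
      have h1 : (0:X) ≤ -(w:X) := by
        have := hnwC; push_cast at this; exact this
      exact le_antisymm (by simpa using h1) hwC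
    have hws : ‖w‖ = 1 := by simpa using hwS
    have hw0' : w = 0 := Subtype.ext (by simpa using hw0)
    rw [hw0'] at hws
    simp at hws
  -- the catching element
  refine ⟨(u : X), ?_⟩
  intro ι _ hne hdir f hf
  haveI := hne
  obtain ⟨α₀⟩ := hne
  obtain ⟨hanti, hglb⟩ := hf
  have hlb : ∀ α, (0 : X) ≤ f α := fun α => hglb.1 ⟨α, rfl⟩
  have hfV : ∀ α, f α ∈ V := fun α => Submodule.subset_span (hlb α)
  set g : ι → V := fun α => ⟨f α, hfV α⟩ with hg
  have hgC : ∀ α, g α ∈ C := fun α => hlb α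
  set K : Set V := {v : V | v ∈ C ∧ g α₀ - v ∈ C} with hKdef
  have hKclosed : IsClosed K := by
    have : K = C ∩ ((fun v : V => g α₀ - v) ⁻¹' C) := rfl
    rw [this]
    exact hCclosed.inter (hCclosed.preimage (continuous_const.sub continuous_id))
  have hKcomp : IsCompact K := Metric.isCompact_of_isClosed_isBounded hKclosed (hbdd (g α₀))
  have hgK : ∀ β, α₀ ≤ β → g β ∈ K := by
    intro β hβ
    refine ⟨hgC β, ?_⟩
    show (0:X) ≤ ((g α₀ - g β : V) : X)
    push_cast
    exact sub_nonneg.mpr (hanti hβ)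
  set F : ι → Set V := fun α => closure (g '' {β | α ≤ β ∧ α₀ ≤ β}) with hF
  have hFsubK : ∀ α, F α ⊆ K := by
    intro α
    apply closure_minimal _ hKclosed
    rintro _ ⟨β, ⟨_, hβ2⟩, rfl⟩
    exact hgK β hβ2
  have hFne : ∀ α, (F α).Nonempty := by
    intro α
    obtain ⟨γ, hγ1, hγ2⟩ := hdir α α₀
    exact ⟨g γ, subset_closure ⟨γ, ⟨hγ1, hγ2⟩, rfl⟩⟩
  have hFdir : Directed (· ⊇ ·) F := by
    intro α β
    obtain ⟨γ, hγ1, hγ2⟩ := hdir α β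
    exact ⟨γ, closure_mono (Set.image_mono fun δ hδ => ⟨le_trans hγ1 hδ.1, hδ.2⟩),
      closure_mono (Set.image_mono fun δ hδ => ⟨le_trans hγ2 hδ.1, hδ.2⟩)⟩
  obtain ⟨z, hz⟩ := IsCompact.nonempty_iInter_of_directed_nonempty_isCompact_isClosed F hFdir hFne
    (fun α => hKcomp.of_isClosed_subset isClosed_closure (hFsubK α))
    (fun α => isClosed_closure)
  simp only [Set.mem_iInter] at hz
  -- z is a lower bound of the net
  have hzle : ∀ α, (z : X) ≤ f α := by
    intro α
    have hLclosed : IsClosed {v : V | (v : X) ≤ f α} := by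
      have : {v : V | (v : X) ≤ f α} = (fun v : V => g α - v) ⁻¹' C := by
        ext v
        show ((v:V):X) ≤ f α ↔ (0:X) ≤ ((g α - v : V) : X)
        push_cast
        rw [sub_nonneg]
      rw [this]
      exact hCclosed.preimage (continuous_const.sub continuous_id)
    have hsub : F α ⊆ {v : V | (v : X) ≤ f α} := by
      apply closure_minimal _ hLclosed
      rintro _ ⟨β, ⟨hβ1, _⟩, rfl⟩
      exact hanti hβ1
    exact hsub (hz α)
  have hz0 : z = 0 := by
    have h1 : (z : X) ≤ 0 := hglb.2 (by rintro w ⟨α, rfl⟩; exact hzle α)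
    have h2 : (0 : X) ≤ (z : X) := (hFsubK α₀ (hz α₀)).1
    exact Subtype.ext (le_antisymm h1 h2)
  -- find β with f β close to 0
  obtain ⟨ε, hε0, hball⟩ := Metric.mem_nhds_iff.mp (mem_interior_iff_mem_nhds.mp hu)
  have h0cl : (0 : V) ∈ F α₀ := hz0 ▸ hz α₀
  obtain ⟨p, ⟨β, ⟨hβ, _⟩, rfl⟩, hp⟩ := Metric.mem_closure_iff.mp h0cl ε hε0
  have hpnorm : ‖g β‖ < ε := by rwa [dist_zero_left] at hp
  have hmem : u - g β ∈ C := by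
    apply hball
    rw [Metric.mem_ball, dist_eq_norm]
    simpa using hpnorm
  have hfin : (0 : X) ≤ (u : X) - f β := by
    have h := hmem
    calc (0:X) ≤ ((u - g β : V) : X) := h
    _ = (u : X) - f β := by push_cast; rfl
  exact ⟨β, sub_nonneg.mp hfin⟩
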